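/- Let H be a finite-dimensional commutative associative algebra over a field, with a linear functional l : H → k, and let (r_I) be a basis of H. Define the matrices F_I by (F_I)_{JK} = l(r_I · r_J · r_K), and suppose that for some index J₀ the basis element r_{J₀} equals the unit of H and the matrix F_{J₀} is invertible. Then for all indices I, K: F_I · F_{J₀}⁻¹ · F_K = F_K · F_{J₀}⁻¹ · F_I. -/

import Mathlib

/-- WDVV-type commutation: for a finite-dimensional commutative associative unital algebra H
over a field, a linear functional l, a basis (r_I) with r_{J₀} = 1 and the matrices
(F_I)_{JK} = l(r_I r_J r_K), if F_{J₀} is invertible then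
F_I · F_{J₀}⁻¹ · F_K = F_K · F_{J₀}⁻¹ · F_I. -/
theorem wdvv_commutation {k : Type*} [Field k] {A : Type*} [CommRing A] [Algebra k A]
    {ι : Type*} [Fintype ι] [DecidableEq ι]
    (r : Module.Basis ι k A) (l : A →ₗ[k] k)
    (F : ι → Matrix ι ι k)
    (hF : ∀ I J K, F I J K = l (r I * r J * r K))
    (J₀ : ι) (hunit : r J₀ = 1) (hinv : IsUnit (F J₀).det)
    (I K : ι) :
    F I * (F J₀)⁻¹ * F K = F K * (F J₀)⁻¹ * F I := by
  classical
  set η := F J₀ with hη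
  set μ : ι → Matrix ι ι k := fun P J Q => r.repr (r P * r J) Q with hμ
  -- key linearity lemma
  have key : ∀ (x y : A), ∑ P, r.repr x P * l (r P * y) = l (x * y) := by
    intro x y
    have hx := r.sum_repr x
    calc ∑ P, r.repr x P * l (r P * y)
        = l ((∑ P, r.repr x P • r P) * y) := by
          rw [Finset.sum_mul, map_sum]
          simp [smul_mul_assoc]
      _ = l (x * y) := by rw [hx]
  have key2 : ∀ (x y : A) (L : ι), ∑ P, r.repr x P * r.repr (y * r P) L
      = r.repr (y * x) L := by
    intro x y L
    have hx := r.sum_repr x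
    calc ∑ P, r.repr x P * r.repr (y * r P) L
        = r.repr (y * ∑ P, r.repr x P • r P) L := by
          rw [Finset.mul_sum, map_sum]
          simp [mul_smul_comm, Finsupp.sum_apply']
      _ = r.repr (y * x) L := by rw [hx]
  have hFμ : ∀ P, F P = μ P * η := by
    intro P
    ext J L
    rw [Matrix.mul_apply]
    simp only [hμ, hη, hF, hunit, one_mul]
    rw [key (r P * r J) (r L)]
  have hμcomm : ∀ P Q, μ P * μ Q = μ Q * μ P := by
    have h : ∀ P Q : ι, μ P * μ Q = fun J L => r.repr (r Q * (r P * r J)) L := by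
      intro P Q
      ext J L
      rw [Matrix.mul_apply]
      simp only [hμ]
      exact key2 (r P * r J) (r Q) L
    intro P Q
    rw [h P Q, h Q P]
    ext J L
    rw [show r Q * (r P * r J) = r P * (r Q * r J) by ring]
  have hηinv : η * η⁻¹ = 1 := Matrix.mul_nonsing_inv η hinv
  calc F I * η⁻¹ * F K = μ I * (η * η⁻¹) * (μ K * η) := by
        rw [hFμ I, hFμ K]; simp only [Matrix.mul_assoc]
    _ = μ I * μ K * η := by rw [hηinv, Matrix.mul_one, Matrix.mul_assoc]
    _ = μ K * μ I * η := by rw [hμcomm]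
    _ = μ K * (η * η⁻¹) * (μ I * η) := by rw [hηinv, Matrix.mul_one, Matrix.mul_assoc]
    _ = F K * η⁻¹ * F I := by rw [hFμ I, hFμ K]; simp only [Matrix.mul_assoc]
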